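/- arXiv:2211.14704 — 2 statements merged into one kernel-verified Lean document; each statement's English description precedes it below -/
import Mathlib

section
/- For n ≥ 2, let H_n be the graph obtained from the n-cube Q_n by attaching a one-way infinite path q_1, q_2, … at the vertex ∅ (the all-zeros vertex). Then the smallest closed A(H_n)-invariant subspace of ℓ²(V(H_n)) containing e_∅ equals the closed linear span of {𝟙_{W_d} : 0 ≤ d ≤ n} ∪ {e_{q_j} : j ≥ 1}, where W_d is the set of subsets of [n] of cardinality d and 𝟙_{W_d} = Σ_{|S|=d} e_S. -/
noncomputable section

/-- Vertices of the graph `H_n` obtained from the `n`-cube `Q_n` (vertices: subsets of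
`[n]`, modelled as `Finset (Fin n)`) by attaching a one-way infinite path at `∅`:
`Sum.inl S` is the cube vertex `S` and `Sum.inr j` is the tail vertex `q_{j+1}`. -/
abbrev CubeTailV (n : ℕ) := Finset (Fin n) ⊕ ℕ

/-- Adjacency in `H_n`: two subsets are adjacent exactly when their symmetric difference
has one element; the edge `∅ q_1`; and the path edges `q_j q_{j+1}` for `j ≥ 1`. -/
def cubeTailAdj (n : ℕ) (x y : CubeTailV n) : Prop :=
  (∃ S T : Finset (Fin n), (symmDiff S T).card = 1 ∧ x = Sum.inl S ∧ y = Sum.inl T) ∨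
  ((x = Sum.inl (∅ : Finset (Fin n)) ∧ y = Sum.inr 0) ∨
    (y = Sum.inl (∅ : Finset (Fin n)) ∧ x = Sum.inr 0)) ∨
  (∃ j : ℕ, (x = Sum.inr j ∧ y = Sum.inr (j + 1)) ∨ (y = Sum.inr j ∧ x = Sum.inr (j + 1)))

/-- The Hilbert space `ℓ²(V(H_n))`. -/
abbrev cubeTailSpace (n : ℕ) := lp (fun _ : CubeTailV n => ℂ) 2

/-- The standard orthonormal basis vector `e_w` of `ℓ²(V(H_n))`. -/
def stdVec {n : ℕ} (w : CubeTailV n) : cubeTailSpace n := lp.single 2 w 1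

open scoped Classical


namespace CubeTailAux
variable {n : ℕ}
lemma stdVec_apply (w x : CubeTailV n) : (stdVec w : ∀ _ : CubeTailV n, ℂ) x = if x = w then 1 else 0 := by
  classical
  rw [stdVec, lp.single_apply]
  split_ifs with h <;> simp [h]
lemma inner_stdVec_left (w : CubeTailV n) (f : cubeTailSpace n) :
    (inner ℂ (stdVec w) f : ℂ) = f w := by
  rw [stdVec, lp.inner_single_left]; simp
def nbr (n : ℕ) : CubeTailV n → Finset (CubeTailV n)
  | Sum.inl S => (Finset.univ.image fun i : Fin n => (Sum.inl (symmDiff {i} S) : CubeTailV n)) ∪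
      (if S = ∅ then {Sum.inr 0} else ∅)
  | Sum.inr 0 => {Sum.inl ∅, Sum.inr 1}
  | Sum.inr (j+1) => {Sum.inr j, Sum.inr (j+2)}
lemma symmDiff_singleton_inj (S : Finset (Fin n)) :
    Function.Injective (fun i : Fin n => symmDiff {i} S) := by
  intro i j h
  have h2 := congrArg (fun U => symmDiff U S) h
  simpa [symmDiff_symmDiff_cancel_right] using h2
lemma card_symmDiff_eq_one_iff (S T : Finset (Fin n)) :
    (symmDiff S T).card = 1 ↔ ∃ i, S = symmDiff {i} T := by
  constructor
  · intro h
    rcases Finset.card_eq_one.1 h with ⟨i, hi⟩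
    exact ⟨i, by rw [← hi, symmDiff_symmDiff_cancel_right]⟩
  · rintro ⟨i, rfl⟩
    rw [symmDiff_symmDiff_cancel_right]
    simp

lemma adj_iff (x y : CubeTailV n) : cubeTailAdj n x y ↔ x ∈ nbr n y := by
  constructor
  · rintro (⟨S, T, h1, rfl, rfl⟩ | (⟨rfl, rfl⟩ | ⟨rfl, rfl⟩) | ⟨j, (⟨rfl, rfl⟩ | ⟨rfl, rfl⟩)⟩)
    · rcases (card_symmDiff_eq_one_iff S T).1 h1 with ⟨i, rfl⟩
      simp [nbr]
    · simp [nbr]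
    · simp [nbr]
    · simp [nbr]
    · cases j <;> simp [nbr]
  · intro h
    rcases y with T | j
    · simp only [nbr, Finset.mem_union, Finset.mem_image, Finset.mem_univ, true_and] at h
      rcases h with ⟨i, rfl⟩ | h
      · exact Or.inl ⟨_, T, (card_symmDiff_eq_one_iff _ T).2 ⟨i, rfl⟩, rfl, rfl⟩
      · split_ifs at h with hT
        · subst hT
          simp only [Finset.mem_singleton] at h
          subst h
          exact Or.inr (Or.inl (Or.inr ⟨rfl, rfl⟩))
        · simp at h
    · cases j with
      | zero =>
          simp only [nbr, Finset.mem_insert, Finset.mem_singleton] at h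
          rcases h with rfl | rfl
          · exact Or.inr (Or.inl (Or.inl ⟨rfl, rfl⟩))
          · exact Or.inr (Or.inr ⟨0, Or.inr ⟨rfl, rfl⟩⟩)
      | succ j =>
          simp only [nbr, Finset.mem_insert, Finset.mem_singleton] at h
          rcases h with rfl | rfl
          · exact Or.inr (Or.inr ⟨j, Or.inl ⟨rfl, rfl⟩⟩)
          · exact Or.inr (Or.inr ⟨j+1, Or.inr ⟨rfl, rfl⟩⟩)

variable (A : cubeTailSpace n →L[ℂ] cubeTailSpace n)
lemma A_stdVec (hA : ∀ x y : CubeTailV n, (inner ℂ (stdVec x) (A (stdVec y)) : ℂ)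
      = if cubeTailAdj n x y then 1 else 0) (y : CubeTailV n) :
    A (stdVec y) = ∑ x ∈ nbr n y, stdVec x := by
  apply lp.ext
  funext x
  have h1 : (A (stdVec y) : ∀ _ : CubeTailV n, ℂ) x = if cubeTailAdj n x y then 1 else 0 := by
    rw [← inner_stdVec_left x (A (stdVec y)), hA]
  rw [h1, lp.coeFn_sum, Finset.sum_apply]
  simp only [stdVec_apply]
  rw [Finset.sum_ite_eq]
  simp [adj_iff]


-- ### Stage 2
lemma A_apply_coord (hsa : IsSelfAdjoint A)
    (hA : ∀ x y : CubeTailV n, (inner ℂ (stdVec x) (A (stdVec y)) : ℂ)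
      = if cubeTailAdj n x y then 1 else 0) (f : cubeTailSpace n) (x : CubeTailV n) :
    (A f : ∀ _ : CubeTailV n, ℂ) x = ∑ y ∈ nbr n x, (f : ∀ _ : CubeTailV n, ℂ) y := by
  have hsym := (ContinuousLinearMap.isSelfAdjoint_iff_isSymmetric.mp hsa)
  have h1 : (A f : ∀ _ : CubeTailV n, ℂ) x = inner ℂ (A (stdVec x)) f := by
    rw [← inner_stdVec_left x (A f)]
    exact (hsym (stdVec x) f).symm
  rw [h1, A_stdVec A hA, sum_inner]
  exact Finset.sum_congr rfl fun y _ => inner_stdVec_left y f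

/-- indicator of the level `W_d` -/
def ind (n d : ℕ) : cubeTailSpace n :=
  ∑ S ∈ Finset.univ.filter (fun S : Finset (Fin n) => S.card = d), stdVec (Sum.inl S)

lemma ind_apply_inl (d : ℕ) (T : Finset (Fin n)) :
    (ind n d : ∀ _ : CubeTailV n, ℂ) (Sum.inl T) = if T.card = d then 1 else 0 := by
  rw [ind, lp.coeFn_sum, Finset.sum_apply]
  simp only [stdVec_apply, Sum.inl.injEq]
  rw [Finset.sum_ite_eq]
  simp

lemma ind_apply_inr (d j : ℕ) : (ind n d : ∀ _ : CubeTailV n, ℂ) (Sum.inr j) = 0 := by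
  rw [ind, lp.coeFn_sum, Finset.sum_apply]
  simp [stdVec_apply]

lemma symmDiff_singleton_of_mem {T : Finset (Fin n)} {i : Fin n} (h : i ∈ T) :
    symmDiff {i} T = T.erase i := by
  ext a
  simp only [Finset.mem_symmDiff, Finset.mem_singleton, Finset.mem_erase]
  constructor
  · rintro (⟨rfl, ha⟩ | ⟨ha, hne⟩)
    · exact absurd h ha
    · exact ⟨hne, ha⟩
  · rintro ⟨hne, ha⟩
    exact Or.inr ⟨ha, hne⟩

lemma symmDiff_singleton_of_not_mem {T : Finset (Fin n)} {i : Fin n} (h : i ∉ T) :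
    symmDiff {i} T = insert i T := by
  ext a
  simp only [Finset.mem_symmDiff, Finset.mem_singleton, Finset.mem_insert]
  constructor
  · rintro (⟨rfl, _⟩ | ⟨ha, _⟩)
    · exact Or.inl rfl
    · exact Or.inr ha
  · rintro (rfl | ha)
    · exact Or.inl ⟨rfl, h⟩
    · exact Or.inr ⟨ha, fun he => h (he ▸ ha)⟩

/-- decomposition of the neighbour sum at a cube vertex -/
lemma nbr_sum_inl (f : CubeTailV n → ℂ) (T : Finset (Fin n)) :
    ∑ y ∈ nbr n (Sum.inl T), f y
      = (∑ i ∈ T, f (Sum.inl (T.erase i))) + (∑ i ∈ Tᶜ, f (Sum.inl (insert i T)))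
        + (if T = ∅ then f (Sum.inr 0) else 0) := by
  have hdisj : Disjoint (Finset.univ.image fun i : Fin n => (Sum.inl (symmDiff {i} T) : CubeTailV n))
      (if T = ∅ then ({Sum.inr 0} : Finset (CubeTailV n)) else ∅) := by
    split_ifs
    · rw [Finset.disjoint_singleton_right]
      simp
    · exact Finset.disjoint_empty_right _
  rw [nbr, Finset.sum_union hdisj, Finset.sum_image (fun a _ b _ h => by
      exact symmDiff_singleton_inj T (by simpa using h))]
  congr 1
  · rw [← Finset.union_compl T, Finset.sum_union (disjoint_compl_right : Disjoint T Tᶜ)]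
    congr 1
    · exact Finset.sum_congr rfl fun i hi => by rw [symmDiff_singleton_of_mem hi]
    · exact Finset.sum_congr rfl fun i hi => by
        rw [symmDiff_singleton_of_not_mem (Finset.mem_compl.mp hi)]
  · split_ifs <;> simp

lemma A_ind_zero (hsa : IsSelfAdjoint A)
    (hA : ∀ x y : CubeTailV n, (inner ℂ (stdVec x) (A (stdVec y)) : ℂ)
      = if cubeTailAdj n x y then 1 else 0) : A (ind n 0) = stdVec (Sum.inr 0) + ind n 1 := by
  apply lp.ext
  funext x
  rw [lp.coeFn_add, Pi.add_apply, A_apply_coord A hsa hA]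
  rcases x with T | j
  · rw [nbr_sum_inl]
    simp only [ind_apply_inl, ind_apply_inr, stdVec_apply]
    have h1 : ∀ i ∈ T, ((if (T.erase i).card = 0 then (1:ℂ) else 0)) = if T.card = 1 then 1 else 0 := by
      intro i hi
      have hpos : 0 < T.card := Finset.card_pos.mpr ⟨i, hi⟩
      rw [Finset.card_erase_of_mem hi]
      have he : (T.card - 1 = 0) ↔ (T.card = 1) := by omega
      simp only [he]
    have h2 : ∀ i ∈ Tᶜ, ((if (insert i T).card = 0 then (1:ℂ) else 0)) = 0 := by
      intro i hi
      rw [Finset.card_insert_of_notMem (Finset.mem_compl.mp hi)]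
      simp
    rw [Finset.sum_congr rfl h1, Finset.sum_congr rfl h2, Finset.sum_const, Finset.sum_const]
    simp only [smul_zero, add_zero, nsmul_eq_mul]
    have : (if (Sum.inl T : CubeTailV n) = Sum.inr 0 then (1:ℂ) else 0) = 0 := by simp
    rw [this, zero_add]
    split_ifs with h h2 h3 <;> simp_all
  · cases j with
    | zero =>
        simp [nbr, ind_apply_inl, ind_apply_inr, stdVec_apply, Finset.sum_pair]
    | succ j =>
        simp [nbr, ind_apply_inr, stdVec_apply, Finset.sum_pair]

end CubeTailAux

namespace CubeTailAux
variable {n : ℕ} (A : cubeTailSpace n →L[ℂ] cubeTailSpace n)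

lemma A_ind_succ (hsa : IsSelfAdjoint A)
    (hA : ∀ x y : CubeTailV n, (inner ℂ (stdVec x) (A (stdVec y)) : ℂ)
      = if cubeTailAdj n x y then 1 else 0) (d : ℕ) (hd : d + 1 ≤ n) :
    A (ind n (d+1)) = ((n - d : ℕ) : ℂ) • ind n d + ((d + 2 : ℕ) : ℂ) • ind n (d+2) := by
  have key : ∀ c : ℕ, c ≤ n →
      (c * (if c - 1 = d + 1 then 1 else 0) + (n - c) * (if c + 1 = d + 1 then 1 else 0) : ℕ)
      = (n - d) * (if c = d then 1 else 0) + (d + 2) * (if c = d + 2 then 1 else 0) := by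
    intro c hc
    split_ifs <;> omega
  apply lp.ext
  funext x
  rw [lp.coeFn_add, Pi.add_apply, lp.coeFn_smul, lp.coeFn_smul, Pi.smul_apply, Pi.smul_apply,
    A_apply_coord A hsa hA]
  rcases x with T | j
  · have hT : T.card ≤ n := le_trans (Finset.card_le_univ T) (by simp)
    rw [nbr_sum_inl]
    simp only [ind_apply_inl, ind_apply_inr, smul_eq_mul, ite_self, add_zero]
    have h1 : ∀ i ∈ T, (if (T.erase i).card = d + 1 then (1:ℂ) else 0)
        = ((if T.card - 1 = d + 1 then 1 else 0 : ℕ) : ℂ) := by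
      intro i hi
      rw [Finset.card_erase_of_mem hi]
      split_ifs <;> simp
    have h2 : ∀ i ∈ Tᶜ, (if (insert i T).card = d + 1 then (1:ℂ) else 0)
        = ((if T.card + 1 = d + 1 then 1 else 0 : ℕ) : ℂ) := by
      intro i hi
      rw [Finset.card_insert_of_notMem (Finset.mem_compl.mp hi)]
      split_ifs <;> simp
    rw [Finset.sum_congr rfl h1, Finset.sum_congr rfl h2, Finset.sum_const, Finset.sum_const,
      Finset.card_compl, Fintype.card_fin, nsmul_eq_mul, nsmul_eq_mul]
    have hr1 : (if T.card = d then (1:ℂ) else 0) = ((if T.card = d then 1 else 0 : ℕ) : ℂ) := by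
      split_ifs <;> simp
    have hr2 : (if T.card = d + 2 then (1:ℂ) else 0)
        = ((if T.card = d + 2 then 1 else 0 : ℕ) : ℂ) := by
      split_ifs <;> simp
    rw [hr1, hr2, ← Nat.cast_mul, ← Nat.cast_mul, ← Nat.cast_mul, ← Nat.cast_mul,
      ← Nat.cast_add, ← Nat.cast_add, Nat.cast_inj]
    exact key T.card hT
  · cases j with
    | zero => simp [nbr, ind_apply_inl, ind_apply_inr, Finset.sum_pair]
    | succ j => simp [nbr, ind_apply_inr, Finset.sum_pair]

lemma A_tail_zero (hA : ∀ x y : CubeTailV n, (inner ℂ (stdVec x) (A (stdVec y)) : ℂ)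
      = if cubeTailAdj n x y then 1 else 0) :
    A (stdVec (Sum.inr 0)) = stdVec (Sum.inl ∅) + stdVec (Sum.inr 1) := by
  rw [A_stdVec A hA]
  show ∑ x ∈ ({Sum.inl ∅, Sum.inr 1} : Finset (CubeTailV n)), stdVec x = _
  rw [Finset.sum_pair (by simp)]

lemma A_tail_succ (hA : ∀ x y : CubeTailV n, (inner ℂ (stdVec x) (A (stdVec y)) : ℂ)
      = if cubeTailAdj n x y then 1 else 0) (j : ℕ) :
    A (stdVec (Sum.inr (j+1))) = stdVec (Sum.inr j) + stdVec (Sum.inr (j+2)) := by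
  rw [A_stdVec A hA]
  show ∑ x ∈ ({Sum.inr j, Sum.inr (j+2)} : Finset (CubeTailV n)), stdVec x = _
  rw [Finset.sum_pair (by simp)]

end CubeTailAux

namespace CubeTailAux
variable {n : ℕ}

lemma continuous_eval (x : CubeTailV n) :
    Continuous fun f : cubeTailSpace n => (f : ∀ _ : CubeTailV n, ℂ) x := by
  have h : (fun f : cubeTailSpace n => (f : ∀ _ : CubeTailV n, ℂ) x)
      = fun f => (innerSL ℂ (stdVec x)) f := by
    funext f
    simp [inner_stdVec_left]
  rw [h]
  exact (innerSL ℂ (stdVec x)).continuous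

/-- The closed submodule of functions constant on the levels of the cube. -/
def levelC (n : ℕ) : Submodule ℂ (cubeTailSpace n) where
  carrier := {f | ∀ S T : Finset (Fin n), S.card = T.card →
    (f : ∀ _ : CubeTailV n, ℂ) (Sum.inl S) = f (Sum.inl T)}
  add_mem' := by
    intro f g hf hg S T h
    simp only [lp.coeFn_add, Pi.add_apply, hf S T h, hg S T h]
  zero_mem' := by intro S T h; simp
  smul_mem' := by
    intro c f hf S T h
    simp only [lp.coeFn_smul, Pi.smul_apply, hf S T h]

lemma isClosed_levelC : IsClosed ((levelC n : Submodule ℂ (cubeTailSpace n)) : Set (cubeTailSpace n)) := by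
  have h : ((levelC n : Submodule ℂ (cubeTailSpace n)) : Set (cubeTailSpace n))
      = ⋂ (S : Finset (Fin n)) (T : Finset (Fin n)) (_ : S.card = T.card),
        {f : cubeTailSpace n | (f : ∀ _ : CubeTailV n, ℂ) (Sum.inl S) = f (Sum.inl T)} := by
    ext f
    simp only [Set.mem_iInter, Set.mem_setOf_eq]
    rfl
  rw [h]
  refine isClosed_iInter fun S => isClosed_iInter fun T => isClosed_iInter fun _ => ?_
  exact isClosed_eq (continuous_eval _) (continuous_eval _)

lemma ind_mem_levelC (d : ℕ) : ind n d ∈ levelC n := fun S T h => by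
  rw [ind_apply_inl, ind_apply_inl, h]

lemma stdVec_inr_mem_levelC (j : ℕ) : stdVec (Sum.inr j : CubeTailV n) ∈ levelC n := fun S T _ => by
  rw [stdVec_apply, stdVec_apply]
  simp

lemma ind_eq_zero_of_gt {m : ℕ} (h : n < m) : ind n m = 0 := by
  rw [ind, Finset.filter_false_of_mem, Finset.sum_empty]
  intro S _
  exact fun hS => absurd hS (by
    have : S.card ≤ n := le_trans (Finset.card_le_univ S) (by simp)
    omega)

lemma stdVec_inl_empty_eq : stdVec (Sum.inl (∅ : Finset (Fin n)) : CubeTailV n) = ind n 0 := by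
  rw [ind]
  have h : Finset.univ.filter (fun S : Finset (Fin n) => S.card = 0) = {∅} := by
    ext S
    simp [Finset.card_eq_zero]
  rw [h, Finset.sum_singleton]

/-- the generating set appearing in the theorem -/
def gens (n : ℕ) : Set (cubeTailSpace n) :=
  (Set.range fun d : Fin (n + 1) =>
      ∑ S ∈ Finset.univ.filter (fun S : Finset (Fin n) => S.card = (d : ℕ)),
        stdVec (Sum.inl S : CubeTailV n)) ∪
    (Set.range fun j : ℕ => stdVec (Sum.inr j : CubeTailV n))

lemma ind_mem_gens {d : ℕ} (hd : d ≤ n) : ind n d ∈ gens n :=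
  Or.inl ⟨⟨d, by omega⟩, rfl⟩

lemma stdVec_inr_mem_gens (j : ℕ) : stdVec (Sum.inr j : CubeTailV n) ∈ gens n :=
  Or.inr ⟨j, rfl⟩

lemma ind_mem_span (m : ℕ) : ind n m ∈ Submodule.span ℂ (gens n) := by
  rcases le_or_gt m n with h | h
  · exact Submodule.subset_span (ind_mem_gens h)
  · rw [ind_eq_zero_of_gt h]
    exact Submodule.zero_mem _

variable (A : cubeTailSpace n →L[ℂ] cubeTailSpace n)

lemma span_gens_invariant (hsa : IsSelfAdjoint A)
    (hA : ∀ x y : CubeTailV n, (inner ℂ (stdVec x) (A (stdVec y)) : ℂ)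
      = if cubeTailAdj n x y then 1 else 0) :
    ∀ x ∈ Submodule.span ℂ (gens n), A x ∈ Submodule.span ℂ (gens n) := by
  intro x hx
  induction hx using Submodule.span_induction with
  | mem g hg =>
      rcases hg with ⟨d, rfl⟩ | ⟨j, rfl⟩
      · show A (ind n (d : ℕ)) ∈ _
        rcases Nat.eq_zero_or_eq_succ_pred (d : ℕ) with h0 | hsucc
        · rw [h0, A_ind_zero A hsa hA]
          exact Submodule.add_mem _ (Submodule.subset_span (stdVec_inr_mem_gens 0)) (ind_mem_span 1)
        · rcases Nat.exists_eq_succ_of_ne_zero (hsucc ▸ Nat.succ_ne_zero _) with ⟨e, he⟩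
          rw [he, A_ind_succ A hsa hA e (by have := d.isLt; omega)]
          exact Submodule.add_mem _ (Submodule.smul_mem _ _ (ind_mem_span e))
            (Submodule.smul_mem _ _ (ind_mem_span (e + 2)))
      · cases j with
        | zero =>
            rw [A_tail_zero A hA, stdVec_inl_empty_eq]
            exact Submodule.add_mem _ (ind_mem_span 0)
              (Submodule.subset_span (stdVec_inr_mem_gens 1))
        | succ j =>
            rw [A_tail_succ A hA j]
            exact Submodule.add_mem _ (Submodule.subset_span (stdVec_inr_mem_gens j))
              (Submodule.subset_span (stdVec_inr_mem_gens (j + 2)))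
  | zero => simpa using Submodule.zero_mem _
  | add y z _ _ hy hz => simpa [map_add] using Submodule.add_mem _ hy hz
  | smul c y _ hy => simpa [map_smul] using Submodule.smul_mem _ c hy

/-- closure of an invariant submodule is invariant -/
lemma closure_invariant (S : Submodule ℂ (cubeTailSpace n))
    (h : ∀ x ∈ S, A x ∈ S) :
    ∀ x ∈ S.topologicalClosure, A x ∈ S.topologicalClosure := by
  intro x hx
  have h1 : A x ∈ closure (A '' (S : Set (cubeTailSpace n))) :=
    image_closure_subset_closure_image A.continuous ⟨x, hx, rfl⟩
  have h2 : closure (A '' (S : Set (cubeTailSpace n))) ⊆ closure (S : Set (cubeTailSpace n)) :=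
    closure_mono (by rintro _ ⟨y, hy, rfl⟩; exact h y hy)
  exact h2 h1

end CubeTailAux

namespace CubeTailAux

/-- Chebyshev-like sequence: solutions of the free Jacobi recurrence on the tail. -/
def cheb (t : ℝ) : ℕ → ℝ
  | 0 => 1
  | 1 => t
  | (j+2) => t * cheb t (j+1) - cheb t j

lemma cheb_invariant (t : ℝ) (j : ℕ) :
    cheb t (j+1) ^ 2 + cheb t j ^ 2 - t * cheb t (j+1) * cheb t j = 1 := by
  induction j with
  | zero => simp [cheb]; ring
  | succ j ih =>
      have h : cheb t (j+2) = t * cheb t (j+1) - cheb t j := rfl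
      rw [h]
      nlinarith [ih]

lemma cheb_sq_lower_le (t : ℝ) (ht : |t| ≤ 2) (j : ℕ) :
    (1:ℝ)/2 ≤ cheb t j ^ 2 + cheb t (j+1) ^ 2 := by
  have h := cheb_invariant t j
  have ha := abs_nonneg (cheb t (j+1))
  have hb := abs_nonneg (cheb t j)
  have habs : |t * cheb t (j+1) * cheb t j| ≤ 2 * |cheb t (j+1)| * |cheb t j| := by
    rw [abs_mul, abs_mul]
    nlinarith [mul_nonneg ha hb]
  have hlow : -(2 * |cheb t (j+1)| * |cheb t j|) ≤ t * cheb t (j+1) * cheb t j :=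
    (abs_le.mp habs).1
  nlinarith [sq_abs (cheb t (j+1)), sq_abs (cheb t j), sq_nonneg (|cheb t (j+1)| - |cheb t j|)]

lemma cheb_ge_one (t : ℝ) (ht : 2 < |t|) (j : ℕ) :
    1 ≤ |cheb t j| ∧ |cheb t j| ≤ |cheb t (j+1)| := by
  induction j with
  | zero =>
      constructor
      · simp [cheb]
      · simp only [cheb]
        rw [abs_one]
        linarith
  | succ j ih =>
      rcases ih with ⟨h1, h2⟩
      have h3 : 1 ≤ |cheb t (j+1)| := le_trans h1 h2
      refine ⟨h3, ?_⟩
      have h4 : cheb t (j+2) = t * cheb t (j+1) - cheb t j := rfl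
      have h5 : |t * cheb t (j+1)| - |cheb t j| ≤ |cheb t (j+2)| := by
        rw [h4]
        have := abs_sub_abs_le_abs_sub (t * cheb t (j+1)) (cheb t j)
        linarith
      rw [abs_mul] at h5
      nlinarith

lemma cheb_sq_lower (t : ℝ) (j : ℕ) :
    (1:ℝ)/2 ≤ cheb t j ^ 2 + cheb t (j+1) ^ 2 := by
  rcases le_or_gt (|t|) 2 with h | h
  · exact cheb_sq_lower_le t h j
  · have h1 := (cheb_ge_one t h j).1
    have h2 : 1 ≤ cheb t j ^ 2 := by nlinarith [sq_abs (cheb t j)]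
    nlinarith [sq_nonneg (cheb t (j+1))]

/-- If a scalar multiple of `cheb t` is square-summable then the scalar is `0`. -/
lemma eq_zero_of_summable_cheb (t : ℝ) (c : ℂ) (h : Summable fun j : ℕ => ‖c‖ ^ 2 * cheb t j ^ 2) :
    c = 0 := by
  by_contra hc
  have hc2 : ‖c‖ ^ 2 ≠ 0 := pow_ne_zero _ (norm_ne_zero_iff.mpr hc)
  have h2 : Summable fun j : ℕ => cheb t j ^ 2 := by
    have h' := h.mul_left (‖c‖ ^ 2)⁻¹
    refine (summable_congr fun j => ?_).mp h'
    rw [← mul_assoc, inv_mul_cancel₀ hc2, one_mul]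
  have h3 : Filter.Tendsto (fun j : ℕ => cheb t j ^ 2) Filter.atTop (nhds 0) :=
    h2.tendsto_atTop_zero
  have h4 : Filter.Tendsto (fun j : ℕ => cheb t (j+1) ^ 2) Filter.atTop (nhds 0) :=
    h3.comp (Filter.tendsto_add_atTop_nat 1)
  have h5 : Filter.Tendsto (fun j : ℕ => cheb t j ^ 2 + cheb t (j+1) ^ 2) Filter.atTop (nhds 0) := by
    simpa using h3.add h4
  have h6 : ∀ᶠ j : ℕ in Filter.atTop, cheb t j ^ 2 + cheb t (j+1) ^ 2 < 1/2 :=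
    h5.eventually (gt_mem_nhds (by norm_num))
  rcases h6.exists with ⟨j, hj⟩
  exact absurd (cheb_sq_lower t j) (by linarith)

/-- tail coordinates of an `ℓ²` element are square-summable -/
lemma summable_tail (f : cubeTailSpace n) :
    Summable fun j : ℕ => ‖(f : ∀ _ : CubeTailV n, ℂ) (Sum.inr j)‖ ^ 2 := by
  have h1 : Summable fun x : CubeTailV n => ‖(f : ∀ _ : CubeTailV n, ℂ) x‖ ^ (2:ℝ) := by
    have := (lp.memℓp f).summable (p := 2) (by norm_num)
    simpa using this
  have h2 := h1.comp_injective (Sum.inr_injective (α := Finset (Fin n)))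
  have h3 : ∀ j : ℕ, ‖(f : ∀ _ : CubeTailV n, ℂ) (Sum.inr j)‖ ^ (2:ℝ)
      = ‖(f : ∀ _ : CubeTailV n, ℂ) (Sum.inr j)‖ ^ 2 := fun j => by
    rw [← Real.rpow_natCast _ 2]
    norm_num
  exact (summable_congr fun j => (h3 j)).mp h2

end CubeTailAux

namespace CubeTailAux
variable {n : ℕ} (A : cubeTailSpace n →L[ℂ] cubeTailSpace n)

/-- Coordinate formulas for `A w` when all cube coordinates of `w` vanish. -/
lemma step_props (hsa : IsSelfAdjoint A)
    (hA : ∀ x y : CubeTailV n, (inner ℂ (stdVec x) (A (stdVec y)) : ℂ)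
      = if cubeTailAdj n x y then 1 else 0)
    (W : Submodule ℂ (cubeTailSpace n))
    (hWinv : ∀ x ∈ W, A x ∈ W)
    (hW0 : ∀ w ∈ W, (w : ∀ _ : CubeTailV n, ℂ) (Sum.inl ∅) = 0)
    (w : cubeTailSpace n) (hw : w ∈ W)
    (hinl : ∀ S : Finset (Fin n), (w : ∀ _ : CubeTailV n, ℂ) (Sum.inl S) = 0) :
    (w : ∀ _ : CubeTailV n, ℂ) (Sum.inr 0) = 0 ∧
    (∀ S : Finset (Fin n), (A w : ∀ _ : CubeTailV n, ℂ) (Sum.inl S) = 0) ∧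
    ((A w : ∀ _ : CubeTailV n, ℂ) (Sum.inr 0) = w (Sum.inr 1)) ∧
    (∀ j : ℕ, (A w : ∀ _ : CubeTailV n, ℂ) (Sum.inr (j+1)) = w (Sum.inr j) + w (Sum.inr (j+2))) := by
  have hb0 : (w : ∀ _ : CubeTailV n, ℂ) (Sum.inr 0) = 0 := by
    have h1 : (A w : ∀ _ : CubeTailV n, ℂ) (Sum.inl ∅) = 0 := hW0 _ (hWinv w hw)
    rw [A_apply_coord A hsa hA, nbr_sum_inl] at h1
    simpa [hinl] using h1
  refine ⟨hb0, ?_, ?_, ?_⟩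
  · intro S
    rw [A_apply_coord A hsa hA, nbr_sum_inl]
    simp [hinl, hb0]
  · rw [A_apply_coord A hsa hA]
    show ∑ y ∈ ({Sum.inl ∅, Sum.inr 1} : Finset (CubeTailV n)), (w : ∀ _ : CubeTailV n, ℂ) y = _
    rw [Finset.sum_pair (by simp)]
    simp [hinl]
  · intro j
    rw [A_apply_coord A hsa hA]
    show ∑ y ∈ ({Sum.inr j, Sum.inr (j+2)} : Finset (CubeTailV n)), (w : ∀ _ : CubeTailV n, ℂ) y = _
    rw [Finset.sum_pair (by simp)]

lemma coords_zero_tail (hsa : IsSelfAdjoint A)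
    (hA : ∀ x y : CubeTailV n, (inner ℂ (stdVec x) (A (stdVec y)) : ℂ)
      = if cubeTailAdj n x y then 1 else 0)
    (W : Submodule ℂ (cubeTailSpace n))
    (hWinv : ∀ x ∈ W, A x ∈ W)
    (hW0 : ∀ w ∈ W, (w : ∀ _ : CubeTailV n, ℂ) (Sum.inl ∅) = 0) :
    ∀ j : ℕ, ∀ w ∈ W, (∀ S : Finset (Fin n), (w : ∀ _ : CubeTailV n, ℂ) (Sum.inl S) = 0) →
      (w : ∀ _ : CubeTailV n, ℂ) (Sum.inr j) = 0 := by
  intro j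
  induction j using Nat.twoStepInduction with
  | zero =>
      intro w hw hinl
      exact (step_props A hsa hA W hWinv hW0 w hw hinl).1
  | one =>
      intro w hw hinl
      obtain ⟨h0, hAinl, hA0, _⟩ := step_props A hsa hA W hWinv hW0 w hw hinl
      have := (step_props A hsa hA W hWinv hW0 (A w) (hWinv w hw) hAinl).1
      rw [hA0] at this
      exact this
  | more j ih ih1 =>
      intro w hw hinl
      obtain ⟨h0, hAinl, _, hAj⟩ := step_props A hsa hA W hWinv hW0 w hw hinl
      have h1 := ih1 (A w) (hWinv w hw) hAinl
      rw [hAj j] at h1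
      have h2 := ih w hw hinl
      rw [h2, zero_add] at h1
      exact h1

/-- a canonical subset of `[n]` of cardinality `d` (for `d ≤ n`) -/
def repS (n d : ℕ) : Finset (Fin n) := Finset.univ.filter (fun x : Fin n => (x : ℕ) < d)

lemma card_repS {d : ℕ} (hd : d ≤ n) : (repS n d).card = d := by
  have h1 : (repS n d).image Fin.val = Finset.range d := by
    ext x
    simp only [Finset.mem_image, Finset.mem_range, repS, Finset.mem_filter, Finset.mem_univ,
      true_and]
    constructor
    · rintro ⟨i, hi, rfl⟩
      exact hi
    · intro hx
      exact ⟨⟨x, lt_of_lt_of_le hx hd⟩, hx, rfl⟩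
  have h2 : ((repS n d).image Fin.val).card = (Finset.range d).card := by rw [h1]
  rwa [Finset.card_image_of_injective _ Fin.val_injective, Finset.card_range] at h2

lemma repS_zero : repS n 0 = ∅ := by
  ext x
  simp [repS]

end CubeTailAux

namespace CubeTailAux
variable {n : ℕ} (A : cubeTailSpace n →L[ℂ] cubeTailSpace n)

lemma subW_eq_bot (hn : 2 ≤ n) (hsa : IsSelfAdjoint A)
    (hA : ∀ x y : CubeTailV n, (inner ℂ (stdVec x) (A (stdVec y)) : ℂ)
      = if cubeTailAdj n x y then 1 else 0)
    (W : Submodule ℂ (cubeTailSpace n))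
    (hWinv : ∀ x ∈ W, A x ∈ W)
    (hW0 : ∀ w ∈ W, (w : ∀ _ : CubeTailV n, ℂ) (Sum.inl ∅) = 0)
    (hWC : ∀ w ∈ W, w ∈ levelC n) : W = ⊥ := by
  classical
  -- vanishing of all cube coordinates forces the vector to vanish
  have hallzero : ∀ w ∈ W, (∀ S : Finset (Fin n), (w : ∀ _ : CubeTailV n, ℂ) (Sum.inl S) = 0)
      → w = 0 := by
    intro w hw hinl
    apply lp.ext
    funext x
    rcases x with S | j
    · simpa using hinl S
    · simpa using coords_zero_tail A hsa hA W hWinv hW0 j w hw hinl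
  -- finite dimensionality of W
  let L : ↥W →ₗ[ℂ] (Fin n → ℂ) := LinearMap.pi fun i =>
    (innerSL ℂ (stdVec (Sum.inl (repS n ((i : ℕ) + 1)) : CubeTailV n))).toLinearMap.comp W.subtype
  have hLinj : Function.Injective L := by
    rw [← LinearMap.ker_eq_bot, LinearMap.ker_eq_bot']
    intro w hLw
    have hcoord : ∀ i : Fin n, (w.1 : ∀ _ : CubeTailV n, ℂ) (Sum.inl (repS n ((i : ℕ) + 1))) = 0 := by
      intro i
      have := congrFun hLw i
      simpa [L, LinearMap.pi_apply, inner_stdVec_left] using this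
    have hinl : ∀ S : Finset (Fin n), (w.1 : ∀ _ : CubeTailV n, ℂ) (Sum.inl S) = 0 := by
      intro S
      have hcle : S.card ≤ n := le_trans (Finset.card_le_univ S) (by simp)
      rcases Nat.eq_zero_or_pos S.card with h0 | hpos
      · rw [Finset.card_eq_zero.mp h0]
        exact hW0 w.1 w.2
      · obtain ⟨i, hi⟩ : ∃ i : ℕ, S.card = i + 1 := ⟨S.card - 1, by omega⟩
        have hlt : i < n := by omega
        have heq := hWC w.1 w.2 S (repS n (i + 1)) (by rw [card_repS (by omega), hi])
        rw [heq]
        exact hcoord ⟨i, hlt⟩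
    exact Subtype.ext (hallzero w.1 w.2 hinl)
  haveI : FiniteDimensional ℂ ↥W := FiniteDimensional.of_injective L hLinj
  -- suppose W ≠ ⊥ and get an eigenvector
  by_contra hne
  haveI : Nontrivial ↥W := Submodule.nontrivial_iff_ne_bot.mpr hne
  let Arest : ↥W →ₗ[ℂ] ↥W := (A : cubeTailSpace n →ₗ[ℂ] cubeTailSpace n).restrict hWinv
  obtain ⟨μ, hμ⟩ := Module.End.exists_eigenvalue Arest
  obtain ⟨φ, hφ⟩ := hμ.exists_hasEigenvector
  have hφne : (φ : cubeTailSpace n) ≠ 0 := fun h => hφ.2 (Subtype.ext h)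
  have heig : A (φ : cubeTailSpace n) = μ • (φ : cubeTailSpace n) := by
    have h := hφ.apply_eq_smul
    have h2 := congrArg Subtype.val h
    simpa [Arest, LinearMap.restrict_apply] using h2
  -- the eigenvalue is real
  have hsym := ContinuousLinearMap.isSelfAdjoint_iff_isSymmetric.mp hsa
  have hconj : starRingEnd ℂ μ = μ := by
    have h := hsym (φ : cubeTailSpace n) (φ : cubeTailSpace n)
    simp only [ContinuousLinearMap.coe_coe] at h
    rw [heig, inner_smul_left, inner_smul_right] at h
    exact mul_right_cancel₀ (inner_self_ne_zero.mpr hφne) h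
  set t : ℝ := μ.re with htdef
  have hμt : (t : ℂ) = μ := Complex.conj_eq_iff_re.mp hconj
  -- coordinatewise eigen equations
  have heq : ∀ x : CubeTailV n,
      ∑ y ∈ nbr n x, ((φ : cubeTailSpace n) : ∀ _ : CubeTailV n, ℂ) y
        = μ * ((φ : cubeTailSpace n) : ∀ _ : CubeTailV n, ℂ) x := by
    intro x
    have h : ((A (φ : cubeTailSpace n) : cubeTailSpace n) : ∀ _ : CubeTailV n, ℂ) x
        = ((μ • (φ : cubeTailSpace n) : cubeTailSpace n) : ∀ _ : CubeTailV n, ℂ) x :=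
      congrFun (congrArg _ heig) x
    rw [A_apply_coord A hsa hA, lp.coeFn_smul, Pi.smul_apply, smul_eq_mul] at h
    exact h
  set f : ∀ _ : CubeTailV n, ℂ := ((φ : cubeTailSpace n) : ∀ _ : CubeTailV n, ℂ) with hfdef
  have hf0 : f (Sum.inl ∅) = 0 := hW0 _ φ.2
  -- tail coordinates vanish
  have hb1 : f (Sum.inr 1) = μ * f (Sum.inr 0) := by
    have h := heq (Sum.inr 0)
    rw [show nbr n (Sum.inr 0) = {Sum.inl ∅, Sum.inr 1} from rfl,
      Finset.sum_pair (by simp)] at h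
    rw [hf0, zero_add] at h
    exact h
  have hbrec : ∀ j : ℕ, f (Sum.inr j) + f (Sum.inr (j+2)) = μ * f (Sum.inr (j+1)) := by
    intro j
    have h := heq (Sum.inr (j+1))
    rw [show nbr n (Sum.inr (j+1)) = {Sum.inr j, Sum.inr (j+2)} from rfl,
      Finset.sum_pair (by simp)] at h
    exact h
  have hbcheb : ∀ j : ℕ, f (Sum.inr j) = f (Sum.inr 0) * ((cheb t j : ℝ) : ℂ) := by
    intro j
    induction j using Nat.twoStepInduction with
    | zero => simp [cheb]
    | one => rw [hb1, ← hμt, show cheb t 1 = t from rfl]; ring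
    | more j ih ih1 =>
        have h := hbrec j
        have h2 : f (Sum.inr (j+2)) = μ * f (Sum.inr (j+1)) - f (Sum.inr j) := by
          rw [← h]; ring
        rw [h2, ih, ih1, ← hμt, show cheb t (j+2) = t * cheb t (j+1) - cheb t j from rfl]
        push_cast
        ring
  have hb0 : f (Sum.inr 0) = 0 := by
    apply eq_zero_of_summable_cheb t
    have hsum := summable_tail (φ : cubeTailSpace n)
    refine (summable_congr fun j => ?_).mp hsum
    show ‖f (Sum.inr j)‖ ^ 2 = ‖f (Sum.inr 0)‖ ^ 2 * cheb t j ^ 2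
    rw [hbcheb j, norm_mul, mul_pow]
    congr 1
    rw [Complex.norm_real, Real.norm_eq_abs, sq_abs]
  have hball : ∀ j : ℕ, f (Sum.inr j) = 0 := fun j => by rw [hbcheb j, hb0, zero_mul]
  -- cube coordinates
  have hlev : ∀ S T : Finset (Fin n), S.card = T.card → f (Sum.inl S) = f (Sum.inl T) :=
    hWC _ φ.2
  have heqT : ∀ T : Finset (Fin n),
      (∑ i ∈ T, f (Sum.inl (T.erase i))) + (∑ i ∈ Tᶜ, f (Sum.inl (insert i T)))
        = μ * f (Sum.inl T) := by
    intro T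
    have h := heq (Sum.inl T)
    rw [nbr_sum_inl] at h
    rcases eq_or_ne T ∅ with rfl | hT
    · rw [if_pos rfl, hb0, add_zero] at h
      exact h
    · rw [if_neg hT, add_zero] at h
      exact h
  have ha1 : f (Sum.inl (repS n 1)) = 0 := by
    have h := heqT ∅
    rw [hf0, mul_zero] at h
    have hrw : ∀ i ∈ (∅ : Finset (Fin n))ᶜ, f (Sum.inl (insert i ∅)) = f (Sum.inl (repS n 1)) := by
      intro i _
      apply hlev
      rw [card_repS (by omega)]
      simp
    rw [Finset.sum_empty, zero_add, Finset.sum_congr rfl hrw, Finset.sum_const] at h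
    have hcard : ((∅ : Finset (Fin n))ᶜ).card = n := by
      rw [Finset.card_compl]
      simp
    rw [hcard, nsmul_eq_mul] at h
    have hn0 : (n : ℂ) ≠ 0 := Nat.cast_ne_zero.mpr (by omega)
    exact (mul_eq_zero.mp h).resolve_left hn0
  have hstep : ∀ d : ℕ, 1 ≤ d → d < n → f (Sum.inl (repS n (d-1))) = 0 →
      f (Sum.inl (repS n d)) = 0 → f (Sum.inl (repS n (d+1))) = 0 := by
    intro d hd1 hdn hprev hcur
    have h := heqT (repS n d)
    have hcard : (repS n d).card = d := card_repS (by omega)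
    have hrw1 : ∀ i ∈ repS n d, f (Sum.inl ((repS n d).erase i)) = f (Sum.inl (repS n (d-1))) := by
      intro i hi
      apply hlev
      rw [Finset.card_erase_of_mem hi, hcard, card_repS (by omega)]
    have hrw2 : ∀ i ∈ (repS n d)ᶜ, f (Sum.inl (insert i (repS n d)))
        = f (Sum.inl (repS n (d+1))) := by
      intro i hi
      apply hlev
      rw [Finset.card_insert_of_notMem (Finset.mem_compl.mp hi), hcard, card_repS (by omega)]
    rw [Finset.sum_congr rfl hrw1, Finset.sum_congr rfl hrw2, Finset.sum_const, Finset.sum_const,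
      hprev, smul_zero, zero_add, hcur, mul_zero, Finset.card_compl, Fintype.card_fin, hcard,
      nsmul_eq_mul] at h
    have hnd0 : ((n - d : ℕ) : ℂ) ≠ 0 := Nat.cast_ne_zero.mpr (by omega)
    exact (mul_eq_zero.mp h).resolve_left hnd0
  have hall : ∀ d : ℕ, d ≤ n → f (Sum.inl (repS n d)) = 0 := by
    intro d
    induction d using Nat.twoStepInduction with
    | zero => intro _; rw [repS_zero]; exact hf0
    | one => intro _; exact ha1
    | more j ih ih1 =>
        intro h
        have := hstep (j+1) (by omega) (by omega) (by simpa using ih (by omega)) (ih1 (by omega))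
        simpa using this
  have hinl : ∀ S : Finset (Fin n), f (Sum.inl S) = 0 := by
    intro S
    have hcle : S.card ≤ n := le_trans (Finset.card_le_univ S) (by simp)
    rw [hlev S (repS n S.card) (card_repS hcle).symm]
    exact hall S.card hcle
  exact hφne (hallzero _ φ.2 hinl)

end CubeTailAux


open CubeTailAux

/-- For `n ≥ 2`, in the `n`-cube with a tail attached at `∅`, the smallest closed
`A(H_n)`-invariant subspace containing `e_∅` is the closed linear span of
`{𝟙_{W_d} : 0 ≤ d ≤ n} ∪ {e_{q_j} : j ≥ 1}`, where `W_d` is the set of subsets of `[n]`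
of cardinality `d`. -/
theorem cube_tail_walk_module (n : ℕ) (hn : 2 ≤ n)
    (A : cubeTailSpace n →L[ℂ] cubeTailSpace n) (hsa : IsSelfAdjoint A)
    (hA : ∀ x y : CubeTailV n, (inner ℂ (stdVec x) (A (stdVec y)) : ℂ)
      = if cubeTailAdj n x y then 1 else 0)
    (K : Submodule ℂ (cubeTailSpace n))
    (hK : K = (Submodule.span ℂ
      ((Set.range fun d : Fin (n + 1) =>
          ∑ S ∈ Finset.univ.filter (fun S : Finset (Fin n) => S.card = (d : ℕ)),
            stdVec (Sum.inl S : CubeTailV n)) ∪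
        (Set.range fun j : ℕ => stdVec (Sum.inr j : CubeTailV n)))).topologicalClosure) :
    stdVec (Sum.inl (∅ : Finset (Fin n)) : CubeTailV n) ∈ K ∧
    (∀ x ∈ K, A x ∈ K) ∧
    (∀ K' : Submodule ℂ (cubeTailSpace n), IsClosed (K' : Set (cubeTailSpace n)) →
      (∀ x ∈ K', A x ∈ K') →
      stdVec (Sum.inl (∅ : Finset (Fin n)) : CubeTailV n) ∈ K' → K ≤ K') := by

  classical
  have hK' : K = (Submodule.span ℂ (gens n)).topologicalClosure := hK
  clear hK
  subst hK'
  set KK := (Submodule.span ℂ (gens n)).topologicalClosure with hKK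
  set v0 : cubeTailSpace n := stdVec (Sum.inl (∅ : Finset (Fin n)) : CubeTailV n) with hv0
  -- part 1
  have h1 : v0 ∈ KK := by
    apply Submodule.le_topologicalClosure
    apply Submodule.subset_span
    rw [hv0, stdVec_inl_empty_eq]
    exact ind_mem_gens (by omega)
  -- part 2
  have h2 : ∀ x ∈ KK, A x ∈ KK :=
    closure_invariant A _ (span_gens_invariant A hsa hA)
  refine ⟨h1, h2, ?_⟩
  -- part 3
  intro K' hcl hinv hmem
  have hsym := ContinuousLinearMap.isSelfAdjoint_iff_isSymmetric.mp hsa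
  set M := (Submodule.span ℂ (Set.range fun k : ℕ => (A ^ k) v0)).topologicalClosure with hM
  have hMcl : IsClosed (M : Set (cubeTailSpace n)) := Submodule.isClosed_topologicalClosure _
  have hpow : ∀ k : ℕ, (A ^ (k + 1)) v0 = A ((A ^ k) v0) := by
    intro k
    rw [pow_succ' A k, ContinuousLinearMap.mul_apply]
  have horbK' : ∀ k : ℕ, (A ^ k) v0 ∈ K' := by
    intro k
    induction k with
    | zero => simpa using hmem
    | succ k ih => rw [hpow k]; exact hinv _ ih
  have hMK' : M ≤ K' := by
    rw [hM]
    exact Submodule.topologicalClosure_minimal _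
      (Submodule.span_le.mpr (by rintro _ ⟨k, rfl⟩; exact horbK' k)) hcl
  have horbK : ∀ k : ℕ, (A ^ k) v0 ∈ KK := by
    intro k
    induction k with
    | zero => simpa using h1
    | succ k ih => rw [hpow k]; exact h2 _ ih
  have hMK : M ≤ KK := by
    rw [hM]
    exact Submodule.topologicalClosure_minimal _
      (Submodule.span_le.mpr (by rintro _ ⟨k, rfl⟩; exact horbK k))
      (Submodule.isClosed_topologicalClosure _)
  have hMinv : ∀ x ∈ M, A x ∈ M := by
    apply closure_invariant
    intro x hx
    induction hx using Submodule.span_induction with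
    | mem g hg =>
        rcases hg with ⟨k, rfl⟩
        exact Submodule.subset_span ⟨k + 1, by simpa using hpow k⟩
    | zero => simp
    | add y z _ _ hy hz => simpa [map_add] using Submodule.add_mem _ hy hz
    | smul c y _ hy => simpa [map_smul] using Submodule.smul_mem _ c hy
  have hv0M : v0 ∈ M := by
    apply Submodule.le_topologicalClosure
    exact Submodule.subset_span ⟨0, by simp⟩
  set W := KK ⊓ Mᗮ with hW
  have hWinv : ∀ x ∈ W, A x ∈ W := by
    rintro x ⟨hx1, hx2⟩
    refine ⟨h2 x hx1, (Submodule.mem_orthogonal M (A x)).mpr fun u hu => ?_⟩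
    have h3 : (inner ℂ (A u) x : ℂ) = 0 :=
      (Submodule.mem_orthogonal M x).mp hx2 (A u) (hMinv u hu)
    have h4 := hsym u x
    simp only [ContinuousLinearMap.coe_coe] at h4
    rw [← h4]
    exact h3
  have hW0 : ∀ w ∈ W, (w : ∀ _ : CubeTailV n, ℂ) (Sum.inl ∅) = 0 := by
    rintro w ⟨_, hw2⟩
    have h3 : (inner ℂ v0 w : ℂ) = 0 := (Submodule.mem_orthogonal M w).mp hw2 v0 hv0M
    rw [hv0, inner_stdVec_left] at h3
    exact h3
  have hKC : KK ≤ levelC n := by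
    rw [hKK]
    refine Submodule.topologicalClosure_minimal _ ?_ isClosed_levelC
    rw [Submodule.span_le]
    rintro _ (⟨d, rfl⟩ | ⟨j, rfl⟩)
    · exact ind_mem_levelC (d : ℕ)
    · exact stdVec_inr_mem_levelC j
  have hWbot : W = ⊥ :=
    subW_eq_bot A hn hsa hA W hWinv hW0 fun w hw => hKC hw.1
  haveI : CompleteSpace ↥M := IsClosed.completeSpace_coe (hs := hMcl)
  have hgensM : gens n ⊆ (M : Set (cubeTailSpace n)) := by
    intro g hg
    have hgK : g ∈ KK := Submodule.le_topologicalClosure _ (Submodule.subset_span hg)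
    have hq1 : g - (M.orthogonalProjectionOnto g : cubeTailSpace n) ∈ Mᗮ :=
      Submodule.sub_starProjection_mem_orthogonal (K := M) g
    have hq2 : g - (M.orthogonalProjectionOnto g : cubeTailSpace n) ∈ KK :=
      Submodule.sub_mem _ hgK (hMK (M.orthogonalProjectionOnto g).2)
    have hqW : g - (M.orthogonalProjectionOnto g : cubeTailSpace n) ∈ W := ⟨hq2, hq1⟩
    rw [hWbot, Submodule.mem_bot, sub_eq_zero] at hqW
    rw [hqW]
    exact (M.orthogonalProjectionOnto g).2
  rw [hKK]
  exact Submodule.topologicalClosure_minimal _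
    (Submodule.span_le.mpr fun g hg => hMK' (hgensM hg)) hcl
end
end

section
/- For n ≥ 2, let H_n be the graph obtained from the n-cube Q_n by attaching a one-way infinite path at the vertex ∅, let ζ = exp(2πi/n), and define the unit vectors ψ = n^{−1/2} Σ_{j=1}^{n} ζ^{j−1} e_{{j}} and ψ' = n^{−1/2} Σ_{j=1}^{n} ζ^{j−1} e_{[n]∖{j}} in ℓ²(V(H_n)). Then H_n has perfect state transfer between ψ and ψ' at time π/2: |⟨ψ', e^{−i(π/2)A(H_n)} ψ⟩| = 1. -/
noncomputable section

open scoped Classical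

/-- `ζ = exp(2πi/n)`. -/
def zetaC (n : ℕ) : ℂ := Complex.exp (2 * Real.pi * Complex.I / n)


def fvalC (n : ℕ) (T : Finset (Fin n)) : ℂ := ∑ j ∈ T, zetaC n ^ (j : ℕ)

def sgnC {n : ℕ} (S T : Finset (Fin n)) : ℂ := (-1) ^ (S ∩ T).card

def chiVec (n : ℕ) (T : Finset (Fin n)) : cubeTailSpace n :=
  ∑ S : Finset (Fin n), sgnC S T • stdVec (Sum.inl S)

def uVec (n : ℕ) (m : ℕ) : cubeTailSpace n :=
  ∑ T ∈ Finset.univ.filter (fun T : Finset (Fin n) => T.card = m), fvalC n T • chiVec n T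


lemma exp_apply_eigen {E : Type*} [NormedAddCommGroup E] [NormedSpace ℂ E] [CompleteSpace E]
    (T : E →L[ℂ] E) (μ : ℂ) (v : E) (h : T v = μ • v) :
    NormedSpace.exp T v = Complex.exp μ • v := by
  have hpow : ∀ k : ℕ, (T ^ k) v = μ ^ k • v := by
    intro k
    induction k with
    | zero => simp
    | succ k ih =>
      rw [pow_succ, ContinuousLinearMap.mul_apply, h, map_smul, ih, smul_smul, pow_succ,
        mul_comm]
  have h1 : NormedSpace.exp T v = ∑' k : ℕ, (((Nat.factorial k : ℂ))⁻¹ • T ^ k) v := by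
    rw [NormedSpace.exp_eq_tsum ℂ]
    exact ((ContinuousLinearMap.apply ℂ E v).map_tsum
      (NormedSpace.expSeries_summable' (𝕂 := ℂ) T))
  rw [h1]
  have h2 : ∀ k : ℕ, (((Nat.factorial k : ℂ))⁻¹ • T ^ k) v = (((Nat.factorial k : ℂ))⁻¹ • μ ^ k) • v := by
    intro k
    rw [ContinuousLinearMap.smul_apply, hpow, smul_smul, smul_eq_mul]
  simp_rw [h2]
  rw [Summable.tsum_smul_const (NormedSpace.expSeries_summable' (𝕂 := ℂ) μ)]
  congr 1
  rw [Complex.exp_eq_exp_ℂ, NormedSpace.exp_eq_tsum ℂ]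

lemma inner_stdVec_apply {n : ℕ} (x : CubeTailV n) (v : cubeTailSpace n) :
    (inner ℂ (stdVec x) v : ℂ) = v x := by
  rw [stdVec, lp.inner_single_left]
  simp

lemma stdVec_orthonormal {n : ℕ} (x y : CubeTailV n) :
    (inner ℂ (stdVec x) (stdVec y) : ℂ) = if x = y then 1 else 0 := by
  rw [inner_stdVec_apply, stdVec, lp.single_apply]
  split_ifs with h1 h2 h3 <;> simp_all <;> tauto

lemma ext_coords {n : ℕ} {v w : cubeTailSpace n}
    (h : ∀ x, (inner ℂ (stdVec x) v : ℂ) = inner ℂ (stdVec x) w) : v = w := by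
  apply lp.ext
  funext x
  have := h x
  rwa [inner_stdVec_apply, inner_stdVec_apply] at this

lemma zetaC_pow_n {n : ℕ} (hn : 2 ≤ n) : zetaC n ^ n = 1 := by
  have hne : (n : ℂ) ≠ 0 := Nat.cast_ne_zero.mpr (by omega)
  rw [zetaC, ← Complex.exp_nat_mul]
  have : (n : ℂ) * (2 * Real.pi * Complex.I / n) = 2 * Real.pi * Complex.I := by
    field_simp
  rw [this, Complex.exp_two_pi_mul_I]

lemma zetaC_ne_one {n : ℕ} (hn : 2 ≤ n) : zetaC n ≠ 1 := by
  rw [zetaC, Ne, Complex.exp_eq_one_iff]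
  rintro ⟨k, hk⟩
  have hne : (n : ℂ) ≠ 0 := Nat.cast_ne_zero.mpr (by omega)
  have h2 : (2 * Real.pi * Complex.I) ≠ 0 := by
    simp [Real.pi_ne_zero, Complex.I_ne_zero]
  have hkn : ((k * n : ℤ) : ℂ) = 1 := by
    push_cast
    field_simp at hk
    rcases mul_eq_mul_left_iff.mp (by linear_combination (2 * Real.pi * Complex.I) * hk : (2 * Real.pi * Complex.I) * 1 = (2 * Real.pi * Complex.I) * (k * n)) with h | h
    · linear_combination -h
    · exact absurd h h2
  have : (k * n : ℤ) = 1 := by exact_mod_cast hkn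
  have : (n : ℤ) ∣ 1 := Dvd.intro_left k this
  have := Int.le_of_dvd one_pos this
  omega

lemma sum_zetaC {n : ℕ} (hn : 2 ≤ n) : ∑ j : Fin n, zetaC n ^ (j : ℕ) = 0 := by
  rw [Fin.sum_univ_eq_sum_range, geom_sum_eq (zetaC_ne_one hn), zetaC_pow_n hn]
  simp

lemma neg_one_pow_symmDiff_singleton {n : ℕ} (X : Finset (Fin n)) (i : Fin n) :
    ((-1 : ℂ)) ^ (symmDiff X {i}).card = -(-1 : ℂ) ^ X.card := by
  by_cases hi : i ∈ X
  · have h1 : symmDiff X {i} = X.erase i := by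
      ext a
      by_cases ha : a = i <;> simp [Finset.mem_symmDiff, Finset.mem_erase, ha, hi]
    have hpos : 0 < X.card := Finset.card_pos.mpr ⟨i, hi⟩
    rw [h1, Finset.card_erase_of_mem hi]
    conv_rhs => rw [show X.card = (X.card - 1) + 1 from (Nat.succ_pred_eq_of_pos hpos).symm]
    rw [pow_succ]
    ring
  · have h1 : symmDiff X {i} = insert i X := by
      ext a
      by_cases ha : a = i <;> simp [Finset.mem_symmDiff, Finset.mem_insert, ha, hi]
    rw [h1, Finset.card_insert_of_notMem hi, pow_succ]
    ring

lemma sgnC_symmDiff_mem {n : ℕ} (S T : Finset (Fin n)) (i : Fin n) (hi : i ∈ T) :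
    sgnC (symmDiff S {i}) T = -sgnC S T := by
  have h1 : (symmDiff S {i}) ∩ T = symmDiff (S ∩ T) {i} := by
    ext a
    by_cases ha : a = i <;>
      simp [Finset.mem_symmDiff, Finset.mem_inter, ha, hi] <;> tauto
  rw [sgnC, sgnC, h1, neg_one_pow_symmDiff_singleton]

lemma sgnC_symmDiff_not_mem {n : ℕ} (S T : Finset (Fin n)) (i : Fin n) (hi : i ∉ T) :
    sgnC (symmDiff S {i}) T = sgnC S T := by
  have h1 : (symmDiff S {i}) ∩ T = S ∩ T := by
    ext a
    by_cases ha : a = i <;>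
      simp [Finset.mem_symmDiff, Finset.mem_inter, ha, hi] <;> tauto
  rw [sgnC, sgnC, h1]

lemma sum_sgnC_neighbors {n : ℕ} (S T : Finset (Fin n)) :
    ∑ i : Fin n, sgnC (symmDiff S {i}) T = ((n : ℂ) - 2 * T.card) * sgnC S T := by
  classical
  rw [← Finset.sum_filter_add_sum_filter_not Finset.univ (· ∈ T)]
  have hT : Finset.univ.filter (· ∈ T) = T := Finset.filter_univ_mem T
  have h1 : ∑ i ∈ Finset.univ.filter (· ∈ T), sgnC (symmDiff S {i}) T
      = (T.card : ℂ) * (-sgnC S T) := by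
    rw [hT]
    rw [Finset.sum_congr rfl (fun i hi => sgnC_symmDiff_mem S T i hi)]
    rw [Finset.sum_const, nsmul_eq_mul]
  have h2 : ∑ i ∈ Finset.univ.filter (¬ · ∈ T), sgnC (symmDiff S {i}) T
      = ((n - T.card : ℕ) : ℂ) * sgnC S T := by
    rw [Finset.sum_congr rfl (fun i hi => sgnC_symmDiff_not_mem S T i (by
      simpa using (Finset.mem_filter.mp hi).2))]
    rw [Finset.sum_const, nsmul_eq_mul]
    congr 2
    rw [Finset.filter_not, hT]
    rw [Finset.card_sdiff_of_subset (Finset.subset_univ T)]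
    simp
  rw [h1, h2]
  have hle : T.card ≤ n := by
    simpa using T.card_le_univ
  rw [Nat.cast_sub hle]
  push_cast
  ring

lemma sum_ite_symmDiff {n : ℕ} (S₀ : Finset (Fin n)) (g : Finset (Fin n) → ℂ) :
    ∑ S : Finset (Fin n), (if (symmDiff S₀ S).card = 1 then g S else 0)
      = ∑ i : Fin n, g (symmDiff S₀ {i}) := by
  have hstep : ∀ i : Fin n, g (symmDiff S₀ {i})
      = ∑ S : Finset (Fin n), if S = symmDiff S₀ {i} then g S else 0 := by
    intro i
    rw [Finset.sum_ite_eq' Finset.univ (symmDiff S₀ {i}) g]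
    simp
  simp_rw [hstep]
  rw [Finset.sum_comm]
  apply Finset.sum_congr rfl
  intro S _
  by_cases h : (symmDiff S₀ S).card = 1
  · obtain ⟨a, ha⟩ := Finset.card_eq_one.mp h
    have hSa : S = symmDiff S₀ {a} := by
      rw [← ha, symmDiff_symmDiff_cancel_left]
    rw [if_pos h]
    rw [Finset.sum_eq_single a]
    · rw [if_pos hSa]
    · intro b _ hb
      rw [if_neg]
      intro hSb
      apply hb
      have : ({a} : Finset (Fin n)) = {b} := by
        rw [← symmDiff_symmDiff_cancel_left S₀ {a}, ← symmDiff_symmDiff_cancel_left S₀ {b},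
          ← hSa, ← hSb]
      exact (Finset.singleton_injective this).symm
    · intro h'; exact absurd (Finset.mem_univ a) h'
  · rw [if_neg h]
    symm
    apply Finset.sum_eq_zero
    intro i _
    rw [if_neg]
    intro hS
    apply h
    rw [hS, symmDiff_symmDiff_cancel_left, Finset.card_singleton]

lemma card_filter_mem {n : ℕ} (m : ℕ) (j : Fin n) :
    (Finset.univ.filter (fun T : Finset (Fin n) => T.card = m + 1 ∧ j ∈ T)).card
      = (n - 1).choose m := by
  have h := Finset.card_nbij' (s := Finset.univ.filter
      (fun T : Finset (Fin n) => T.card = m + 1 ∧ j ∈ T))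
      (t := Finset.powersetCard m (Finset.univ.erase j))
      (fun T => T.erase j) (fun T' => insert j T')
      (by
        intro T hT
        simp only [Finset.mem_coe] at hT ⊢
        rw [Finset.mem_filter] at hT
        obtain ⟨-, hcard, hj⟩ := hT
        rw [Finset.mem_powersetCard]
        exact ⟨Finset.erase_subset_erase j (Finset.subset_univ T),
          by rw [Finset.card_erase_of_mem hj, hcard]; omega⟩)
      (by
        intro T' hT'
        simp only [Finset.mem_coe] at hT' ⊢
        rw [Finset.mem_powersetCard] at hT'
        obtain ⟨hsub, hcard⟩ := hT'
        have hj : j ∉ T' := fun h => (Finset.mem_erase.mp (hsub h)).1 rfl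
        rw [Finset.mem_filter]
        exact ⟨Finset.mem_univ _, by rw [Finset.card_insert_of_notMem hj, hcard],
          Finset.mem_insert_self j T'⟩)
      (by
        intro T hT
        simp only [Finset.mem_coe] at hT
        rw [Finset.mem_filter] at hT
        exact Finset.insert_erase hT.2.2)
      (by
        intro T' hT'
        simp only [Finset.mem_coe] at hT'
        rw [Finset.mem_powersetCard] at hT'
        have hj : j ∉ T' := fun h => (Finset.mem_erase.mp (hT'.1 h)).1 rfl
        exact Finset.erase_insert hj)
  rw [h, Finset.card_powersetCard, Finset.card_erase_of_mem (Finset.mem_univ j),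
    Finset.card_univ, Fintype.card_fin]

lemma sum_fvalC_zero {n : ℕ} (hn : 2 ≤ n) (m : ℕ) :
    ∑ T ∈ Finset.univ.filter (fun T : Finset (Fin n) => T.card = m), fvalC n T = 0 := by
  rcases m with - | m
  · have : Finset.univ.filter (fun T : Finset (Fin n) => T.card = 0) = {∅} := by
      ext T
      simp [Finset.card_eq_zero]
    rw [this, Finset.sum_singleton]
    simp [fvalC]
  · have hexp : ∀ T : Finset (Fin n), fvalC n T
        = ∑ j : Fin n, if j ∈ T then zetaC n ^ (j : ℕ) else 0 := by
      intro T
      rw [fvalC, Finset.sum_ite_mem, Finset.univ_inter]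
    simp_rw [hexp]
    rw [Finset.sum_comm]
    have hinner : ∀ j : Fin n,
        (∑ T ∈ Finset.univ.filter (fun T : Finset (Fin n) => T.card = m + 1),
          if j ∈ T then zetaC n ^ (j : ℕ) else 0)
        = ((n-1).choose m : ℂ) * zetaC n ^ (j : ℕ) := by
      intro j
      rw [Finset.sum_ite, Finset.sum_const_zero, add_zero, Finset.sum_const,
        Finset.filter_filter, nsmul_eq_mul]
      congr 2
      exact card_filter_mem m j
    simp_rw [hinner]
    rw [← Finset.mul_sum, sum_zetaC hn, mul_zero]

lemma sgnC_prod {n : ℕ} (S T : Finset (Fin n)) :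
    sgnC S T = ∏ i ∈ T, (if i ∈ S then (-1 : ℂ) else 1) := by
  rw [Finset.prod_ite_mem, Finset.prod_const, sgnC, Finset.inter_comm]

lemma sgnC_insert {n : ℕ} (S T : Finset (Fin n)) (j : Fin n) (hj : j ∉ T) :
    sgnC S (insert j T) = (if j ∈ S then (-1 : ℂ) else 1) * sgnC S T := by
  rw [sgnC_prod, sgnC_prod, Finset.prod_insert hj]

lemma sum_sgnC_powerset {n : ℕ} (S : Finset (Fin n)) (s : Finset (Fin n)) :
    ∑ T ∈ s.powerset, sgnC S T = ∏ i ∈ s, ((if i ∈ S then (-1 : ℂ) else 1) + 1) := by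
  rw [Finset.prod_add]
  apply Finset.sum_congr rfl
  intro T hT
  rw [sgnC_prod, Finset.prod_const_one, mul_one]

lemma G_eval {n : ℕ} (S : Finset (Fin n)) (j : Fin n) :
    ∑ T ∈ Finset.univ.filter (fun T : Finset (Fin n) => j ∈ T), sgnC S T
      = if S ⊆ {j} then (if j ∈ S then (-1 : ℂ) else 1) * 2 ^ (n - 1) else 0 := by
  have hre : ∑ T ∈ Finset.univ.filter (fun T : Finset (Fin n) => j ∈ T), sgnC S T
      = ∑ T' ∈ (Finset.univ.erase j).powerset,
          (if j ∈ S then (-1 : ℂ) else 1) * sgnC S T' := by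
    apply Finset.sum_nbij' (i := fun T => T.erase j) (j := fun T' => insert j T')
    · intro T hT
      rw [Finset.mem_filter] at hT
      rw [Finset.mem_powerset]
      exact Finset.erase_subset_erase j (Finset.subset_univ T)
    · intro T' hT'
      rw [Finset.mem_powerset] at hT'
      rw [Finset.mem_filter]
      exact ⟨Finset.mem_univ _, Finset.mem_insert_self j T'⟩
    · intro T hT
      rw [Finset.mem_filter] at hT
      exact Finset.insert_erase hT.2
    · intro T' hT'
      rw [Finset.mem_powerset] at hT'
      have hj : j ∉ T' := fun h => (Finset.mem_erase.mp (hT' h)).1 rfl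
      exact Finset.erase_insert hj
    · intro T hT
      rw [Finset.mem_filter] at hT
      conv_lhs => rw [← Finset.insert_erase hT.2]
      rw [sgnC_insert S _ j (Finset.notMem_erase j T)]
  rw [hre, ← Finset.mul_sum, sum_sgnC_powerset]
  by_cases hS : S ⊆ {j}
  · rw [if_pos hS]
    congr 1
    have hconst : ∀ i ∈ Finset.univ.erase j, ((if i ∈ S then (-1 : ℂ) else 1) + 1) = 2 := by
      intro i hi
      have hij : i ≠ j := (Finset.mem_erase.mp hi).1
      have : i ∉ S := fun h => hij (Finset.mem_singleton.mp (hS h))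
      rw [if_neg this]; norm_num
    rw [Finset.prod_congr rfl hconst, Finset.prod_const,
      Finset.card_erase_of_mem (Finset.mem_univ j), Finset.card_univ, Fintype.card_fin]
  · rw [if_neg hS]
    obtain ⟨i, hiS, hij⟩ : ∃ i ∈ S, i ≠ j := by
      by_contra h
      push_neg at h
      exact hS (fun i hi => Finset.mem_singleton.mpr (h i hi))
    rw [Finset.prod_eq_zero (i := i) (by simp [hij]) (by rw [if_pos hiS]; ring), mul_zero]

lemma coreC {n : ℕ} (hn : 2 ≤ n) (S : Finset (Fin n)) :
    ∑ T : Finset (Fin n), fvalC n T * sgnC S T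
      = if S.card = 1 then -(2 : ℂ) ^ (n - 1) * fvalC n S else 0 := by
  have hexp : ∀ T : Finset (Fin n), fvalC n T * sgnC S T
      = ∑ j : Fin n, if j ∈ T then zetaC n ^ (j : ℕ) * sgnC S T else 0 := by
    intro T
    rw [fvalC, Finset.sum_mul]
    conv_lhs => rw [show (∑ i ∈ T, zetaC n ^ (i : ℕ) * sgnC S T)
      = ∑ i ∈ Finset.univ ∩ T, zetaC n ^ (i : ℕ) * sgnC S T by rw [Finset.univ_inter],
      ← Finset.sum_ite_mem]
  simp_rw [hexp]
  rw [Finset.sum_comm]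
  have hG : ∀ j : Fin n,
      (∑ T : Finset (Fin n), if j ∈ T then zetaC n ^ (j : ℕ) * sgnC S T else 0)
      = zetaC n ^ (j : ℕ) *
          (if S ⊆ {j} then (if j ∈ S then (-1 : ℂ) else 1) * 2 ^ (n - 1) else 0) := by
    intro j
    rw [← G_eval S j, Finset.mul_sum, Finset.sum_filter]
  simp_rw [hG]
  by_cases h1 : S.card = 1
  · obtain ⟨j₀, hj₀⟩ := Finset.card_eq_one.mp h1
    subst hj₀
    rw [if_pos h1]
    rw [Finset.sum_eq_single j₀]
    · rw [if_pos (by rfl), if_pos (Finset.mem_singleton_self j₀)]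
      rw [fvalC, Finset.sum_singleton]
      ring
    · intro j _ hj
      rw [if_neg, mul_zero]
      intro hsub
      exact hj (Finset.mem_singleton.mp (hsub (Finset.mem_singleton_self j₀))).symm
    · intro h; exact absurd (Finset.mem_univ j₀) h
  · rw [if_neg h1]
    rcases Nat.lt_or_ge S.card 1 with h0 | h2
    · have hS0 : S = ∅ := Finset.card_eq_zero.mp (by omega)
      subst hS0
      have : ∀ j : Fin n, (if (∅ : Finset (Fin n)) ⊆ {j}
          then (if j ∈ (∅ : Finset (Fin n)) then (-1 : ℂ) else 1) * 2 ^ (n - 1) else 0)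
          = 2 ^ (n - 1) := by
        intro j
        rw [if_pos (Finset.empty_subset _), if_neg (Finset.notMem_empty j), one_mul]
      simp_rw [this]
      rw [← Finset.sum_mul, sum_zetaC hn, zero_mul]
    · have h2' : 2 ≤ S.card := by omega
      apply Finset.sum_eq_zero
      intro j _
      rw [if_neg, mul_zero]
      intro hsub
      have := Finset.card_le_card hsub
      rw [Finset.card_singleton] at this
      omega

lemma adj_inl_inl {n : ℕ} (S₀ S : Finset (Fin n)) :
    cubeTailAdj n (Sum.inl S₀) (Sum.inl S) ↔ (symmDiff S₀ S).card = 1 := by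
  simp [cubeTailAdj]

lemma adj_inr_inl {n : ℕ} (k : ℕ) (S : Finset (Fin n)) :
    cubeTailAdj n (Sum.inr k) (Sum.inl S) ↔ (k = 0 ∧ S = ∅) := by
  simp [cubeTailAdj, and_comm, eq_comm]

lemma uVec_eigen {n : ℕ} (hn : 2 ≤ n)
    (A : cubeTailSpace n →L[ℂ] cubeTailSpace n)
    (hA : ∀ x y : CubeTailV n, (inner ℂ (stdVec x) (A (stdVec y)) : ℂ)
      = if cubeTailAdj n x y then 1 else 0) (m : ℕ) :
    A (uVec n m) = ((n : ℂ) - 2 * m) • uVec n m := by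
  apply ext_coords
  intro x
  rw [uVec]
  simp only [map_sum, map_smul, inner_sum, inner_smul_right, chiVec, hA,
    stdVec_orthonormal]
  rcases x with S₀ | k
  · -- cube vertex
    rw [Finset.mul_sum]
    apply Finset.sum_congr rfl
    intro T hT
    have hTm : T.card = m := (Finset.mem_filter.mp hT).2
    have hL : ∑ S : Finset (Fin n),
        sgnC S T * (if cubeTailAdj n (Sum.inl S₀) (Sum.inl S) then (1:ℂ) else 0)
        = ((n : ℂ) - 2 * m) * sgnC S₀ T := by
      simp only [adj_inl_inl, mul_ite, mul_one, mul_zero]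
      rw [sum_ite_symmDiff S₀ (fun S => sgnC S T), sum_sgnC_neighbors, hTm]
    have hR : ∑ S : Finset (Fin n),
        sgnC S T * (if (Sum.inl S₀ : CubeTailV n) = Sum.inl S then (1:ℂ) else 0)
        = sgnC S₀ T := by
      simp only [Sum.inl.injEq, mul_ite, mul_one, mul_zero]
      rw [Finset.sum_ite_eq]
      simp
    rw [hL, hR]
    ring
  · -- tail vertex
    have hL : ∀ T : Finset (Fin n), ∑ S : Finset (Fin n),
        sgnC S T * (if cubeTailAdj n (Sum.inr k) (Sum.inl S) then (1:ℂ) else 0)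
        = if k = 0 then 1 else 0 := by
      intro T
      simp only [adj_inr_inl, mul_ite, mul_one, mul_zero]
      by_cases hk : k = 0
      · simp only [hk, true_and]
        rw [Finset.sum_ite_eq' Finset.univ ∅ (fun S => sgnC S T)]
        simp [sgnC]
      · simp [hk]
    have hR : ∀ T : Finset (Fin n), ∑ S : Finset (Fin n),
        sgnC S T * (if (Sum.inr k : CubeTailV n) = Sum.inl S then (1:ℂ) else 0)
        = 0 := by
      intro T
      apply Finset.sum_eq_zero
      intro S _
      simp
    simp only [hL, hR, mul_zero, Finset.sum_const_zero]
    by_cases hk : k = 0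
    · subst hk
      simp only [if_true, mul_one]
      exact sum_fvalC_zero hn m
    · simp [hk]

lemma sgnC_compl {n : ℕ} (S T : Finset (Fin n)) :
    (-1 : ℂ) ^ T.card * sgnC S T = sgnC Sᶜ T := by
  have h1 : Sᶜ ∩ T = T \ S := by
    ext a
    simp [Finset.mem_compl, Finset.mem_sdiff, Finset.mem_inter]
    tauto
  have hcard : (S ∩ T).card + (Sᶜ ∩ T).card = T.card := by
    rw [h1, Finset.inter_comm]
    exact Finset.card_inter_add_card_sdiff T S
  have h2 : ((-1 : ℂ)) ^ (S ∩ T).card * (-1) ^ (S ∩ T).card = 1 := by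
    rw [← mul_pow]
    norm_num
  rw [sgnC, sgnC, ← hcard, pow_add]
  linear_combination ((-1 : ℂ)) ^ (Sᶜ ∩ T).card * h2

lemma inl_collapse {n : ℕ} (S₀ : Finset (Fin n)) (g : Finset (Fin n) → ℂ) :
    ∑ S : Finset (Fin n), g S * (if (Sum.inl S₀ : CubeTailV n) = Sum.inl S then (1:ℂ) else 0)
      = g S₀ := by
  simp only [Sum.inl.injEq, mul_ite, mul_one, mul_zero]
  rw [Finset.sum_ite_eq]
  simp

lemma fiber_regroup {n : ℕ} (F : Finset (Fin n) → ℂ) :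
    ∑ m ∈ Finset.range (n + 1),
        ∑ T ∈ Finset.univ.filter (fun T : Finset (Fin n) => T.card = m), F T
      = ∑ T : Finset (Fin n), F T := by
  apply Finset.sum_fiberwise_of_maps_to
  intro T _
  rw [Finset.mem_range, Nat.lt_succ_iff]
  calc T.card ≤ (Finset.univ : Finset (Fin n)).card := Finset.card_le_univ T
  _ = n := by rw [Finset.card_univ, Fintype.card_fin]

lemma sumU {n : ℕ} (hn : 2 ≤ n) :
    ∑ m ∈ Finset.range (n + 1), uVec n m
      = (-(2:ℂ) ^ (n-1)) •
          ∑ j : Fin n, zetaC n ^ (j : ℕ) • stdVec (Sum.inl ({j} : Finset (Fin n))) := by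
  apply ext_coords
  intro x
  simp only [inner_sum, inner_smul_right, uVec, chiVec, stdVec_orthonormal]
  rcases x with S₀ | k
  · have hcol : ∀ T : Finset (Fin n), ∑ S : Finset (Fin n),
        sgnC S T * (if (Sum.inl S₀ : CubeTailV n) = Sum.inl S then (1:ℂ) else 0) = sgnC S₀ T :=
      fun T => inl_collapse S₀ (fun S => sgnC S T)
    simp only [hcol]
    rw [fiber_regroup (fun T => fvalC n T * sgnC S₀ T), coreC hn S₀]
    by_cases h1 : S₀.card = 1
    · obtain ⟨j₀, hj₀⟩ := Finset.card_eq_one.mp h1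
      rw [if_pos h1]
      rw [Finset.sum_eq_single j₀]
      · rw [if_pos (by rw [hj₀]), hj₀, fvalC, Finset.sum_singleton]
        ring
      · intro j _ hj
        rw [if_neg, mul_zero]
        intro h
        rw [Sum.inl.injEq] at h
        exact hj (Finset.singleton_injective (hj₀.symm.trans h)).symm
      · intro h; exact absurd (Finset.mem_univ j₀) h
    · rw [if_neg h1]
      symm
      rw [Finset.sum_eq_zero, mul_zero]
      intro j _
      rw [if_neg, mul_zero]
      intro h
      rw [Sum.inl.injEq] at h
      rw [h, Finset.card_singleton] at h1
      exact h1 rfl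
  · have hz : ∀ T : Finset (Fin n), ∑ S : Finset (Fin n),
        sgnC S T * (if (Sum.inr k : CubeTailV n) = Sum.inl S then (1:ℂ) else 0) = 0 := by
      intro T
      apply Finset.sum_eq_zero
      intro S _
      simp
    simp only [hz, mul_zero, Finset.sum_const_zero]
    symm
    rw [Finset.sum_eq_zero, mul_zero]
    intro j _
    simp

lemma sumU' {n : ℕ} (hn : 2 ≤ n) :
    ∑ m ∈ Finset.range (n + 1), ((-1 : ℂ) ^ m) • uVec n m
      = (-(2:ℂ) ^ (n-1)) •
          ∑ j : Fin n, zetaC n ^ (j : ℕ) • stdVec (Sum.inl (({j} : Finset (Fin n))ᶜ)) := by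
  apply ext_coords
  intro x
  simp only [inner_sum, inner_smul_right, uVec, chiVec, stdVec_orthonormal]
  rcases x with S₀ | k
  · have hcol : ∀ T : Finset (Fin n), ∑ S : Finset (Fin n),
        sgnC S T * (if (Sum.inl S₀ : CubeTailV n) = Sum.inl S then (1:ℂ) else 0) = sgnC S₀ T :=
      fun T => inl_collapse S₀ (fun S => sgnC S T)
    simp only [hcol]
    have hw : ∀ m ∈ Finset.range (n+1),
        (-1:ℂ) ^ m * ∑ T ∈ Finset.univ.filter (fun T : Finset (Fin n) => T.card = m),
            fvalC n T * sgnC S₀ T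
        = ∑ T ∈ Finset.univ.filter (fun T : Finset (Fin n) => T.card = m),
            fvalC n T * sgnC S₀ᶜ T := by
      intro m _
      rw [Finset.mul_sum]
      apply Finset.sum_congr rfl
      intro T hT
      have hTm : T.card = m := (Finset.mem_filter.mp hT).2
      rw [← sgnC_compl S₀ T, ← hTm]
      ring
    rw [Finset.sum_congr rfl hw, fiber_regroup (fun T => fvalC n T * sgnC S₀ᶜ T), coreC hn S₀ᶜ]
    by_cases h1 : S₀ᶜ.card = 1
    · obtain ⟨j₀, hj₀⟩ := Finset.card_eq_one.mp h1
      rw [if_pos h1]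
      rw [Finset.sum_eq_single j₀]
      · rw [if_pos (by rw [← hj₀, compl_compl]), hj₀, fvalC, Finset.sum_singleton]
        ring
      · intro j _ hj
        rw [if_neg, mul_zero]
        intro h
        rw [Sum.inl.injEq] at h
        apply hj
        apply Finset.singleton_injective
        rw [← hj₀, h, compl_compl]
      · intro h; exact absurd (Finset.mem_univ j₀) h
    · rw [if_neg h1]
      symm
      rw [Finset.sum_eq_zero, mul_zero]
      intro j _
      rw [if_neg, mul_zero]
      intro h
      rw [Sum.inl.injEq] at h
      rw [h, compl_compl, Finset.card_singleton] at h1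
      exact h1 rfl
  · have hz : ∀ T : Finset (Fin n), ∑ S : Finset (Fin n),
        sgnC S T * (if (Sum.inr k : CubeTailV n) = Sum.inl S then (1:ℂ) else 0) = 0 := by
      intro T
      apply Finset.sum_eq_zero
      intro S _
      simp
    simp only [hz, mul_zero, Finset.sum_const_zero]
    symm
    rw [Finset.sum_eq_zero, mul_zero]
    intro j _
    simp

lemma exp_neg_pi_div_two_mul_I : Complex.exp (-((Real.pi : ℂ)/2) * Complex.I) = -Complex.I := by
  rw [Complex.exp_mul_I, Complex.cos_neg, Complex.sin_neg, Complex.cos_pi_div_two,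
    Complex.sin_pi_div_two]
  ring

lemma expval (n m : ℕ) :
    Complex.exp ((-((Real.pi : ℂ)/2) * Complex.I) * ((n : ℂ) - 2 * m))
      = (-Complex.I) ^ n * (-1 : ℂ) ^ m := by
  have h : (-((Real.pi : ℂ)/2) * Complex.I) * ((n : ℂ) - 2 * m)
      = (n : ℂ) * (-((Real.pi : ℂ)/2) * Complex.I) + (m : ℂ) * ((Real.pi : ℂ) * Complex.I) := by
    ring
  rw [h, Complex.exp_add, Complex.exp_nat_mul, Complex.exp_nat_mul, Complex.exp_pi_mul_I,
    exp_neg_pi_div_two_mul_I]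

lemma conj_zetaC_mul (n : ℕ) : (starRingEnd ℂ) (zetaC n) * zetaC n = 1 := by
  rw [zetaC, ← Complex.exp_conj, ← Complex.exp_add]
  have : (starRingEnd ℂ) (2 * Real.pi * Complex.I / n) + 2 * Real.pi * Complex.I / n = 0 := by
    rw [map_div₀, map_mul, map_mul, Complex.conj_I]
    have h2 : (starRingEnd ℂ) 2 = 2 := by
      rw [show (2:ℂ) = ((2:ℝ):ℂ) by norm_num, Complex.conj_ofReal]
    have h3 : (starRingEnd ℂ) (n : ℂ) = (n : ℂ) := Complex.conj_natCast n
    simp only [h2, h3, Complex.conj_ofReal]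
    ring
  rw [this, Complex.exp_zero]

lemma abs_negI_pow (n : ℕ) : ‖(-Complex.I) ^ n‖ = 1 := by
  rw [norm_pow]
  simp

/-- For `n ≥ 2`, the `n`-cube with a tail attached at `∅` has perfect state transfer at
time `π/2` between `ψ = n^{-1/2} ∑_{j=1}^n ζ^{j-1} e_{{j}}` and
`ψ' = n^{-1/2} ∑_{j=1}^n ζ^{j-1} e_{[n]∖{j}}`  (here `j : Fin n` plays the role of
`j + 1 ∈ [n]`):  `|⟨ψ', e^{-i(π/2)A(H_n)} ψ⟩| = 1`. -/
theorem cube_tail_pst (n : ℕ) (hn : 2 ≤ n)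
    (A : cubeTailSpace n →L[ℂ] cubeTailSpace n) (hsa : IsSelfAdjoint A)
    (hA : ∀ x y : CubeTailV n, (inner ℂ (stdVec x) (A (stdVec y)) : ℂ)
      = if cubeTailAdj n x y then 1 else 0)
    (ψ ψ' : cubeTailSpace n)
    (hψ : ψ = ((Real.sqrt n : ℂ))⁻¹ •
      ∑ j : Fin n, zetaC n ^ (j : ℕ) • stdVec (Sum.inl ({j} : Finset (Fin n)) : CubeTailV n))
    (hψ' : ψ' = ((Real.sqrt n : ℂ))⁻¹ •
      ∑ j : Fin n, zetaC n ^ (j : ℕ) •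
        stdVec (Sum.inl (({j} : Finset (Fin n))ᶜ) : CubeTailV n)) :
    ‖(inner ℂ ψ' (NormedSpace.exp ((-((Real.pi : ℂ) / 2) * Complex.I) • A) ψ))‖ = 1 := by
  set c₀ : ℂ := -((Real.pi : ℂ) / 2) * Complex.I with hc₀
  have h2ne : (-(2:ℂ) ^ (n-1)) ≠ 0 := by
    simp
  have hexp : ∀ m : ℕ, NormedSpace.exp (c₀ • A) (uVec n m)
      = ((-Complex.I) ^ n * (-1:ℂ) ^ m) • uVec n m := by
    intro m
    have h1 : (c₀ • A) (uVec n m) = (c₀ * ((n:ℂ) - 2*m)) • uVec n m := by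
      rw [ContinuousLinearMap.smul_apply, uVec_eigen hn A hA m, smul_smul]
    rw [exp_apply_eigen (c₀ • A) _ _ h1, hc₀, expval n m]
  have hψ'' : (∑ j : Fin n, zetaC n ^ (j:ℕ) •
        stdVec (Sum.inl ({j} : Finset (Fin n)) : CubeTailV n))
      = (-(2:ℂ)^(n-1))⁻¹ • ∑ m ∈ Finset.range (n+1), uVec n m := by
    rw [sumU hn, smul_smul, inv_mul_cancel₀ h2ne, one_smul]
  have hkey : NormedSpace.exp (c₀ • A) ψ = ((-Complex.I) ^ n) • ψ' := by
    rw [hψ, hψ'', map_smul, map_smul, map_sum]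
    simp_rw [hexp, mul_smul]
    rw [← Finset.smul_sum, sumU' hn, hψ']
    rw [smul_smul, smul_smul, smul_smul, smul_smul]
    congr 1
    linear_combination ((Real.sqrt n : ℂ))⁻¹ * (-Complex.I) ^ n * (inv_mul_cancel₀ h2ne)
  rw [hkey, inner_smul_right]
  have hone : ∀ j : Fin n, (starRingEnd ℂ) (zetaC n ^ (j:ℕ)) * zetaC n ^ (j:ℕ) = 1 := by
    intro j
    rw [map_pow, ← mul_pow, conj_zetaC_mul, one_pow]
  have hinner : (inner ℂ ψ' ψ' : ℂ) = 1 := by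
    have ho : Orthonormal ℂ (fun w : CubeTailV n => stdVec w) := by
      rw [orthonormal_iff_ite]
      exact fun x y => stdVec_orthonormal x y
    have hinj : Function.Injective
        (fun j : Fin n => (Sum.inl (({j} : Finset (Fin n))ᶜ) : CubeTailV n)) := by
      intro a b hab
      simp only [Sum.inl.injEq] at hab
      exact Finset.singleton_injective (compl_injective hab)
    have ho' : Orthonormal ℂ
        (fun j : Fin n => stdVec (Sum.inl (({j} : Finset (Fin n))ᶜ) : CubeTailV n)) :=
      ho.comp _ hinj
    rw [hψ', inner_smul_left, inner_smul_right,
      ho'.inner_sum (fun j => zetaC n ^ (j:ℕ)) (fun j => zetaC n ^ (j:ℕ)) Finset.univ]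
    simp_rw [hone]
    rw [Finset.sum_const, Finset.card_univ, Fintype.card_fin, nsmul_eq_mul, mul_one]
    rw [map_inv₀, Complex.conj_ofReal]
    have hs : ((Real.sqrt n : ℝ) : ℂ) * ((Real.sqrt n : ℝ) : ℂ) = (n : ℂ) := by
      rw [← Complex.ofReal_mul, Real.mul_self_sqrt (by positivity)]
      simp
    have hsne : ((Real.sqrt n : ℝ) : ℂ) ≠ 0 := by
      simp only [ne_eq, Complex.ofReal_eq_zero]
      exact ne_of_gt (Real.sqrt_pos.mpr (Nat.cast_pos.mpr (by omega)))
    field_simp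
    linear_combination -hs
  rw [hinner, mul_one, abs_negI_pow]
end
end
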